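/- Let q(x,y) = ax² + bxy + cy² be a primitive integral binary quadratic form with discriminant d = b² − 4ac > 0 and even Gram matrix G = !![2a, b; b, 2c]. If q is ambiguous, i.e. there exists M ∈ GL₂(ℤ) with det M = −1 and Mᵀ G M = G, then q is properly equivalent to a form with middle coefficient 0 or to a form whose first two coefficients are equal: there exist P ∈ SL₂(ℤ) and integers a', c' such that Pᵀ G P = !![2a', 0; 0, 2c'] or Pᵀ G P = !![2a', a'; a', 2c']. -/

import Mathlib

open Matrix

/-- an ambiguous form is properly equivalent to a diagonal form or
to a form whose first two coefficients coincide. -/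
theorem ambiguous_form_properly_equivalent_to_special_form
    (a b c : ℤ) (hprim : Int.gcd a (Int.gcd b c) = 1)
    (hdpos : 0 < b ^ 2 - 4 * a * c)
    (G : Matrix (Fin 2) (Fin 2) ℤ) (hG : G = !![2 * a, b; b, 2 * c])
    (M : Matrix (Fin 2) (Fin 2) ℤ) (hdet : M.det = -1)
    (hM : Mᵀ * G * M = G) :
    ∃ P : Matrix (Fin 2) (Fin 2) ℤ, P.det = 1 ∧ ∃ a' c' : ℤ,
      Pᵀ * G * P = !![2 * a', 0; 0, 2 * c'] ∨
      Pᵀ * G * P = !![2 * a', a'; a', 2 * c'] := by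
  -- G has nonzero determinant
  have hdetG : G.det = -(b ^ 2 - 4 * a * c) := by
    subst hG; simp [Matrix.det_fin_two_of]; ring
  have hdetG0 : G.det ≠ 0 := by rw [hdetG]; omega
  -- Step 1: trace of M is zero
  have h3 : (M.det * G.det) • Mᵀ = G * (M.adjugate * G.adjugate) := by
    have h1 : Mᵀ * G * M * M.adjugate * G.adjugate
        = G * (M.adjugate * G.adjugate) := by
      rw [hM, Matrix.mul_assoc]
    have h2 : Mᵀ * G * M * M.adjugate = M.det • (Mᵀ * G) := by
      rw [Matrix.mul_assoc (Mᵀ * G), Matrix.mul_adjugate, Matrix.mul_smul,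
        Matrix.mul_one]
    rw [h2, Matrix.smul_mul, Matrix.mul_assoc Mᵀ, Matrix.mul_adjugate,
      Matrix.mul_smul, Matrix.mul_one, smul_smul] at h1
    exact h1
  have htr : Matrix.trace M = 0 := by
    have t1 := congrArg Matrix.trace h3
    rw [Matrix.trace_smul, Matrix.trace_transpose, Matrix.trace_mul_comm,
      Matrix.mul_assoc, Matrix.adjugate_mul, Matrix.mul_smul, Matrix.mul_one,
      Matrix.trace_smul] at t1
    have tadj : Matrix.trace M.adjugate = Matrix.trace M := by
      rw [Matrix.adjugate_fin_two]
      simp [Matrix.trace_fin_two]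
      ring
    rw [tadj] at t1
    rw [hdet] at t1
    simp only [smul_eq_mul] at t1
    have h2 : (2 * G.det) * Matrix.trace M = 0 := by linear_combination -t1
    rcases mul_eq_zero.mp h2 with h | h
    · omega
    · exact h
  -- notation for entries
  set p := M 0 0 with hp
  set q := M 0 1 with hq
  set r := M 1 0 with hr
  set s := M 1 1 with hsdef
  have hMe : M = !![p, q; r, s] := by
    rw [hp, hq, hr, hsdef]
    exact (Matrix.etaExpand_eq M).symm
  have hs : s = -p := by
    have : p + s = 0 := by
      simpa [Matrix.trace_fin_two] using htr
    linarith
  have hpqr : p ^ 2 + q * r = 1 := by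
    rw [hMe, Matrix.det_fin_two_of] at hdet
    have : p * s - q * r = -1 := by linarith [hdet]
    rw [hs] at this; nlinarith [this]
  -- Step 2: a primitive +1 eigenvector
  obtain ⟨x₀, y₀, hE1, hE2, hne⟩ :
      ∃ x₀ y₀ : ℤ, p * x₀ + q * y₀ = x₀ ∧ r * x₀ - p * y₀ = y₀ ∧
        ¬(x₀ = 0 ∧ y₀ = 0) := by
    by_cases h : q = 0 ∧ p = 1
    · exact ⟨1 + p, r, by linear_combination hpqr, by ring, by
        intro ⟨h1, _⟩; omega⟩
    · exact ⟨q, 1 - p, by ring, by linear_combination hpqr, by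
        intro ⟨h1, h2⟩; exact h ⟨h1, by omega⟩⟩
  set g : ℤ := (Int.gcd x₀ y₀ : ℤ) with hgdef
  have hg0 : g ≠ 0 := by
    simp only [hgdef, ne_eq, Int.natCast_eq_zero, Int.gcd_eq_zero_iff]
    exact hne
  set x : ℤ := x₀ / g with hxdef
  set y : ℤ := y₀ / g with hydef
  have hx0 : x₀ = g * x := (Int.mul_ediv_cancel' (Int.gcd_dvd_left _ _)).symm
  have hy0 : y₀ = g * y := (Int.mul_ediv_cancel' (Int.gcd_dvd_right _ _)).symm
  have hcop : Int.gcd x y = 1 := by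
    apply Int.gcd_div_gcd_div_gcd
    refine Nat.pos_of_ne_zero fun h => hg0 ?_
    rw [hgdef, h]; simp
  have hE1' : p * x + q * y = x := by
    have h := hE1
    rw [hx0, hy0] at h
    exact mul_left_cancel₀ hg0 (by linear_combination h)
  have hE2' : r * x - p * y = y := by
    have h := hE2
    rw [hx0, hy0] at h
    exact mul_left_cancel₀ hg0 (by linear_combination h)
  -- Bezout
  obtain ⟨u, v, huv⟩ : ∃ u v : ℤ, u * x + v * y = 1 :=
    Int.isCoprime_iff_gcd_eq_one.mpr hcop
  -- Step 3: the change of basis matrix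
  set α : ℤ := q * u ^ 2 - 2 * p * u * v - r * v ^ 2 with hαdef
  set k : ℤ := -(α / 2) with hkdef
  set m : ℤ := α % 2 with hmdef
  have hm01 : m = 0 ∨ m = 1 := Int.emod_two_eq_zero_or_one α
  have hmk : m = α + 2 * k := by
    rw [hmdef, hkdef]
    have := Int.mul_ediv_add_emod α 2
    linarith
  clear_value m k α
  set P : Matrix (Fin 2) (Fin 2) ℤ := !![x, x * k - v; y, y * k + u] with hPdef
  set N : Matrix (Fin 2) (Fin 2) ℤ := !![1, m; 0, -1] with hNdef
  have hdetP : P.det = 1 := by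
    rw [hPdef, Matrix.det_fin_two_of]
    linear_combination huv
  have hα1 : q * u - p * v = x * α + v := by
    rw [hαdef]
    linear_combination (p * v + v - q * u) * huv + u * v * hE1' + v ^ 2 * hE2'
  have hα2 : -(r * v) - p * u = y * α - u := by
    rw [hαdef]
    linear_combination (r * v + p * u - u) * huv - u ^ 2 * hE1' - u * v * hE2'
  have hMP : M * P = P * N := by
    rw [hMe, hPdef, hNdef, hs]
    ext i j
    fin_cases i <;> fin_cases j
    · simp [Matrix.mul_apply, Fin.sum_univ_two]
      linear_combination hE1'
    · simp [Matrix.mul_apply, Fin.sum_univ_two]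
      linear_combination k * hE1' + hα1 - x * hmk
    · simp [Matrix.mul_apply, Fin.sum_univ_two]
      linear_combination hE2'
    · simp [Matrix.mul_apply, Fin.sum_univ_two]
      linear_combination k * hE2' + hα2 - y * hmk
  -- Step 4: conclusion
  refine ⟨P, hdetP, ?_⟩
  set a' : ℤ := a * x ^ 2 + b * x * y + c * y ^ 2 with ha'def
  set c' : ℤ := a * (x * k - v) ^ 2 + b * (x * k - v) * (y * k + u)
    + c * (y * k + u) ^ 2 with hc'def
  set e : ℤ := 2 * a * x * (x * k - v) + b * (x * (y * k + u) + y * (x * k - v))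
    + 2 * c * y * (y * k + u) with hedef
  clear_value a' c' e
  have hPT : Pᵀ = !![x, y; x * k - v, y * k + u] := by
    rw [hPdef]; ext i j; fin_cases i <;> fin_cases j <;> rfl
  have hNT : Nᵀ = !![1, 0; m, -1] := by
    rw [hNdef]; ext i j; fin_cases i <;> fin_cases j <;> rfl
  have hG' : Pᵀ * G * P = !![2 * a', e; e, 2 * c'] := by
    rw [hPT, hPdef, hG]
    ext i j
    fin_cases i <;> fin_cases j <;>
      simp [Matrix.mul_apply, Matrix.transpose_apply, Fin.sum_univ_two, ha'def, hc'def, hedef] <;> ring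
  have hfix : Nᵀ * (Pᵀ * G * P) * N = Pᵀ * G * P := by
    calc Nᵀ * (Pᵀ * G * P) * N = (P * N)ᵀ * G * (P * N) := by
          simp only [Matrix.transpose_mul, Matrix.mul_assoc]
      _ = (M * P)ᵀ * G * (M * P) := by rw [hMP]
      _ = Pᵀ * (Mᵀ * G * M) * P := by
          simp only [Matrix.transpose_mul, Matrix.mul_assoc]
      _ = Pᵀ * G * P := by rw [hM]
  refine ⟨a', c', ?_⟩
  rw [hG', hNT, hNdef] at hfix
  have key := congrFun (congrFun hfix 0) 1
  simp [Matrix.mul_apply, Matrix.transpose_apply, Fin.sum_univ_two] at key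
  rw [hG']
  rcases hm01 with hm | hm
  · left
    rw [hm] at key
    have he : e = 0 := by linarith
    rw [he]
  · right
    rw [hm] at key
    have he : e = a' := by linarith
    rw [he]
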